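/- Every tree T has a maximal matching that covers every vertex of degree at least 2, and such a matching can be computed greedily: choosing an edge from the root to a child and recursing on subtrees rooted at non-leaf unmatched vertices yields such a matching. -/

import Mathlib

open SimpleGraph

namespace TreeMatchAux
open scoped Classical
set_option linter.unusedSectionVars false

variable {V : Type} [Fintype V] [DecidableEq V]

/-- A chosen neighbor of `v` closer to the root `r`. -/
noncomputable def parent (T : SimpleGraph V) (r v : V) : V :=
  if h : ∃ w, T.Adj v w ∧ T.dist r w + 1 = T.dist r v then h.choose else v

lemma parent_spec {T : SimpleGraph V} {r v : V} (hc : T.Connected) (hv : v ≠ r) :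
    T.Adj v (parent T r v) ∧ T.dist r (parent T r v) + 1 = T.dist r v := by
  have hd : T.dist v r ≠ 0 := by
    simp [hc.dist_eq_zero_iff, hv]
  obtain ⟨p, hp⟩ := exists_walk_of_dist_ne_zero hd
  have h : ∃ w, T.Adj v w ∧ T.dist r w + 1 = T.dist r v := by
    cases p with
    | nil => simp at hd
    | cons ha q =>
      rename_i w
      refine ⟨w, ha, ?_⟩
      have h1 : T.dist r w ≤ q.length := by
        rw [SimpleGraph.dist_comm]; exact dist_le q
      have h2 : T.dist r v ≤ T.dist r w + 1 := by
        have := hc.dist_triangle (u := r) (v := w) (w := v)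
        have : T.dist w v ≤ 1 := by
          have : T.dist w v = 1 := dist_eq_one_iff_adj.mpr ha.symm
          omega
        omega
      have h3 : q.length + 1 = T.dist v r := by simpa using hp
      rw [SimpleGraph.dist_comm] at h3
      omega
  rw [parent, dif_pos h]
  exact h.choose_spec

lemma parent_root {T : SimpleGraph V} {r : V} : parent T r r = r := by
  rw [parent, dif_neg]
  rintro ⟨w, -, hw⟩
  simp [dist_self] at hw

/-- A chosen child of `p` (a neighbor whose parent is `p`), if one exists. -/
noncomputable def chosen (T : SimpleGraph V) (r p : V) : V :=
  if h : ∃ c, T.Adj p c ∧ parent T r c = p then h.choose else p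

lemma chosen_spec {T : SimpleGraph V} {r p : V}
    (h : ∃ c, T.Adj p c ∧ parent T r c = p) :
    T.Adj p (chosen T r p) ∧ parent T r (chosen T r p) = p := by
  rw [chosen, dif_pos h]; exact h.choose_spec

/-- `upA n v` : `v` is matched to its parent, with fuel `n`. -/
def upA (T : SimpleGraph V) (r : V) : ℕ → V → Prop
  | 0, _ => False
  | (n+1), v => v = chosen T r (parent T r v) ∧ ¬ upA T r n (parent T r v)

/-- `v` is matched to its parent. -/
noncomputable def up (T : SimpleGraph V) (r : V) (v : V) : Prop :=
  upA T r (T.dist r v) v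

lemma up_root {T : SimpleGraph V} {r : V} : ¬ up T r r := by
  rw [up, dist_self]; exact id

lemma up_iff {T : SimpleGraph V} {r v : V} (hc : T.Connected) (hv : v ≠ r) :
    up T r v ↔ (v = chosen T r (parent T r v) ∧ ¬ up T r (parent T r v)) := by
  obtain ⟨-, hd⟩ := parent_spec (T := T) (r := r) hc hv
  rw [up, up, ← hd]
  rfl

lemma up_ne_root {T : SimpleGraph V} {r v : V} (h : up T r v) : v ≠ r := by
  rintro rfl; exact up_root h

lemma adj_parent {T : SimpleGraph V} {r v : V} (hc : T.Connected) (h : up T r v) :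
    T.Adj v (parent T r v) := (parent_spec hc (up_ne_root h)).1

/-- If `v` is unmatched-up and has a child, its chosen child is matched up to it. -/
lemma up_chosen {T : SimpleGraph V} {r v : V} (hc : T.Connected)
    (hnv : ¬ up T r v) (h : ∃ c, T.Adj v c ∧ parent T r c = v) :
    up T r (chosen T r v) ∧ parent T r (chosen T r v) = v ∧ T.Adj v (chosen T r v) := by
  obtain ⟨hadj, hpar⟩ := chosen_spec h
  have hcr : chosen T r v ≠ r := by
    intro h0
    rw [h0, parent_root] at hpar
    rw [h0, ← hpar] at hadj
    exact T.loopless.irrefl _ hadj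
  refine ⟨?_, hpar, hadj⟩
  rw [up_iff hc hcr, hpar]
  exact ⟨rfl, hnv⟩

/-- In a tree, neighbors closer to the root are unique. -/
lemma parent_unique {T : SimpleGraph V} {r c w₁ w₂ : V} (hc : T.Connected)
    (ha : T.IsAcyclic) (h1 : T.Adj c w₁ ∧ T.dist r w₁ + 1 = T.dist r c)
    (h2 : T.Adj c w₂ ∧ T.dist r w₂ + 1 = T.dist r c) : w₁ = w₂ := by
  obtain ⟨p₁, hp₁, hl₁⟩ := hc.exists_path_of_dist w₁ r
  obtain ⟨p₂, hp₂, hl₂⟩ := hc.exists_path_of_dist w₂ r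
  have hq₁ : (Walk.cons h1.1 p₁).length = T.dist c r := by
    rw [Walk.length_cons, hl₁, SimpleGraph.dist_comm (u := w₁) (v := r),
      SimpleGraph.dist_comm (u := c) (v := r)]
    exact h1.2
  have hq₂ : (Walk.cons h2.1 p₂).length = T.dist c r := by
    rw [Walk.length_cons, hl₂, SimpleGraph.dist_comm (u := w₂) (v := r),
      SimpleGraph.dist_comm (u := c) (v := r)]
    exact h2.2
  have hP₁ : (Walk.cons h1.1 p₁).IsPath := Walk.isPath_of_length_eq_dist _ hq₁
  have hP₂ : (Walk.cons h2.1 p₂).IsPath := Walk.isPath_of_length_eq_dist _ hq₂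
  have := ha.path_unique ⟨Walk.cons h1.1 p₁, hP₁⟩ ⟨Walk.cons h2.1 p₂, hP₂⟩
  have hw : (Walk.cons h1.1 p₁) = (Walk.cons h2.1 p₂) := congrArg Subtype.val this
  have := congrArg (fun q => q.getVert 1) hw
  simpa [Walk.getVert_cons_succ, Walk.getVert_zero] using this

/-- In a tree, adjacent vertices have distinct distances from the root. -/
lemma adj_dist_ne {T : SimpleGraph V} {r u v : V} (hc : T.Connected)
    (ha : T.IsAcyclic) (h : T.Adj u v) : T.dist r u ≠ T.dist r v := by
  intro he
  obtain ⟨p, hp, hl⟩ := hc.exists_path_of_dist r u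
  by_cases hv : v ∈ p.support
  · have hsp := p.take_spec hv
    have hlen := congrArg Walk.length hsp
    rw [Walk.length_append] at hlen
    have h1 : T.dist r v ≤ (p.takeUntil v hv).length := dist_le _
    have h2 : v = u := by
      apply Walk.eq_of_length_eq_zero (p := p.dropUntil v hv)
      omega
    exact T.loopless.irrefl u (h2 ▸ h)
  · have hP : (p.concat h).IsPath := by
      rw [← Walk.isPath_reverse_iff, Walk.reverse_concat, Walk.cons_isPath_iff]
      exact ⟨hp.reverse, by simpa [Walk.support_reverse] using hv⟩
    obtain ⟨q, hq, hlq⟩ := hc.exists_path_of_dist r v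
    have := ha.path_unique ⟨p.concat h, hP⟩ ⟨q, hq⟩
    have hw : p.concat h = q := congrArg Subtype.val this
    have := congrArg Walk.length hw
    rw [Walk.length_concat] at this
    omega

end TreeMatchAux

open TreeMatchAux in
/-- Every finite tree has a maximal matching covering every vertex of degree at least 2
(every inner vertex); such a matching can be obtained greedily along the tree. -/
theorem stmt11 {V : Type} [Fintype V] [DecidableEq V] (T : SimpleGraph V)
    [DecidableRel T.Adj] (htree : T.Connected ∧ T.IsAcyclic) :
    ∃ M : T.Subgraph, M.IsMatching ∧
      (∀ u v : V, T.Adj u v → u ∈ M.verts ∨ v ∈ M.verts) ∧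
      (∀ v : V, 2 ≤ T.degree v → v ∈ M.verts) := by
  classical
  obtain ⟨hc, ha⟩ := htree
  obtain ⟨r⟩ := hc.nonempty
  set P := parent T r with hP
  set U := up T r with hU
  -- the matching subgraph
  let Madj : V → V → Prop := fun a b => (U a ∧ b = P a) ∨ (U b ∧ a = P b)
  have hMsub : ∀ {a b}, Madj a b → T.Adj a b := by
    rintro a b (⟨hu, rfl⟩ | ⟨hu, rfl⟩)
    · exact adj_parent hc hu
    · exact (adj_parent hc hu).symm
  refine ⟨⟨{v | ∃ w, Madj v w}, Madj, fun h => hMsub h,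
      fun {a b} h => ⟨b, h⟩, ⟨fun a b h => by
        rcases h with h | h
        · exact Or.inr h
        · exact Or.inl h⟩⟩, ?_, ?_, ?_⟩
  · -- IsMatching
    rintro v ⟨w, hw⟩
    by_cases hv : U v
    · refine ⟨P v, Or.inl ⟨hv, rfl⟩, ?_⟩
      rintro y (⟨-, rfl⟩ | ⟨hy, rfl⟩)
      · rfl
      · exact absurd hv ((up_iff hc (up_ne_root hy)).mp hy).2.elim
    · -- v is matched through a child
      have hchild : ∃ c, T.Adj v c ∧ P c = v := by
        rcases hw with ⟨hu, rfl⟩ | ⟨hu, he⟩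
        · exact absurd hu hv
        · exact ⟨w, (hMsub (Or.inr ⟨hu, he⟩)), he.symm⟩
      obtain ⟨huc, hpc, hac⟩ := up_chosen hc hv hchild
      refine ⟨chosen T r v, Or.inr ⟨huc, hpc.symm⟩, ?_⟩
      rintro y (⟨hy, rfl⟩ | ⟨hy, rfl⟩)
      · exact absurd hy hv
      · exact ((up_iff hc (up_ne_root hy)).mp hy).1
  · -- every edge has a covered endpoint
    intro u v huv
    -- wlog dist r v = dist r u + 1
    have key : ∀ a b : V, T.Adj a b → T.dist r b = T.dist r a + 1 →
        a ∈ {v | ∃ w, Madj v w} := by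
      intro a b hab hd
      have hbr : b ≠ r := by
        intro h0; subst h0; simp [SimpleGraph.dist_self] at hd
      obtain ⟨hpadj, hpd⟩ := parent_spec (r := r) hc hbr
      rw [← hP] at hpadj hpd
      have hpb : P b = a :=
        parent_unique (r := r) (c := b) hc ha ⟨hpadj, by omega⟩ ⟨hab.symm, by omega⟩
      -- so b is a child of a
      by_cases hva : U a
      · exact ⟨P a, Or.inl ⟨hva, rfl⟩⟩
      · obtain ⟨huc, hpc, hac⟩ := up_chosen hc hva ⟨b, hab, hpb⟩
        exact ⟨chosen T r a, Or.inr ⟨huc, hpc.symm⟩⟩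
    have hne := adj_dist_ne hc ha huv (r := r)
    have h1 : T.dist r v ≤ T.dist r u + 1 := by
      have := hc.dist_triangle (u := r) (v := u) (w := v)
      have h2 : T.dist u v = 1 := dist_eq_one_iff_adj.mpr huv
      omega
    have h1' : T.dist r u ≤ T.dist r v + 1 := by
      have := hc.dist_triangle (u := r) (v := v) (w := u)
      have h2 : T.dist v u = 1 := dist_eq_one_iff_adj.mpr huv.symm
      omega
    rcases Nat.lt_or_ge (T.dist r u) (T.dist r v) with hlt | hge
    · exact Or.inl (key u v huv (by omega))
    · exact Or.inr (key v u huv.symm (by omega))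
  · -- inner vertices are covered
    intro v hdeg
    obtain ⟨c₁, h₁, c₂, h₂, hcc⟩ : ∃ c₁, T.Adj v c₁ ∧ ∃ c₂, T.Adj v c₂ ∧ c₁ ≠ c₂ := by
      have hcard : 1 < (T.neighborFinset v).card := by
        rw [T.card_neighborFinset_eq_degree]; omega
      obtain ⟨c₁, hc₁, c₂, hc₂, hne⟩ := Finset.one_lt_card.mp hcard
      rw [T.mem_neighborFinset] at hc₁ hc₂
      exact ⟨c₁, hc₁, c₂, hc₂, hne⟩
    -- some neighbor is strictly farther from r
    have hfar : ∃ c, T.Adj v c ∧ T.dist r c = T.dist r v + 1 := by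
      by_contra hno
      push_neg at hno
      have hlow : ∀ c, T.Adj v c → T.dist r c + 1 = T.dist r v := by
        intro c hvc
        have hne := adj_dist_ne hc ha hvc (r := r)
        have h1 : T.dist r c ≤ T.dist r v + 1 := by
          have := hc.dist_triangle (u := r) (v := v) (w := c)
          have h2 : T.dist v c = 1 := dist_eq_one_iff_adj.mpr hvc
          omega
        have h1' : T.dist r v ≤ T.dist r c + 1 := by
          have := hc.dist_triangle (u := r) (v := c) (w := v)
          have h2 : T.dist c v = 1 := dist_eq_one_iff_adj.mpr hvc.symm
          omega
        have := hno c hvc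
        omega
      exact hcc (parent_unique hc ha ⟨h₁, hlow _ h₁⟩ ⟨h₂, hlow _ h₂⟩)
    obtain ⟨c, hvc, hdc⟩ := hfar
    have hpc : P c = v := by
      have hcr : c ≠ r := by
        intro hcr; subst hcr; simp [SimpleGraph.dist_self] at hdc
      obtain ⟨hpadj, hpd⟩ := parent_spec (r := r) hc hcr
      rw [← hP] at hpadj hpd
      exact parent_unique (r := r) (c := c) hc ha ⟨hpadj, by omega⟩ ⟨hvc.symm, by omega⟩
    by_cases hva : U v
    · exact ⟨P v, Or.inl ⟨hva, rfl⟩⟩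
    · obtain ⟨huc, hpcc, hac⟩ := up_chosen hc hva ⟨c, hvc, hpc⟩
      exact ⟨chosen T r v, Or.inr ⟨huc, hpcc.symm⟩⟩
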